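/- Let M be a tractable metric space. Then the magnitude map on nonempty compact subsets of M (with the Hausdorff metric) is uniformly continuous if and only if the magnitude map on nonempty finite subsets of M (with the Hausdorff metric) is uniformly continuous. -/

import Mathlib

open Metric TopologicalSpace Filter Topology Bornology
open scoped ENNReal NNReal Matrix

/-- The similarity matrix of a finite subset of a metric space. -/
noncomputable def simMatrix {X : Type*} [MetricSpace X] (s : Finset X) : Matrix s s ℝ :=
  fun i j => Real.exp (-dist (i : X) (j : X))

/-- A metric space is positive definite when every finite subspace has a positive
definite similarity matrix. -/
def IsPosDefSpace (X : Type*) [MetricSpace X] : Prop :=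
  ∀ s : Finset X, (simMatrix s).PosDef

/-- The magnitude of a finite subset of a metric space: the sum of the entries of the
inverse of its similarity matrix. -/
noncomputable def finMag {X : Type*} [MetricSpace X] (s : Finset X) : ℝ :=
  letI : DecidableEq X := Classical.decEq X
  ∑ i, ∑ j, (simMatrix s)⁻¹ i j

/-- The magnitude of a (compact) subset of a metric space, valued in `[0, ∞]`:
the supremum of the magnitudes of its finite subsets. -/
noncomputable def cMagE {X : Type*} [MetricSpace X] (K : Set X) : ℝ≥0∞ :=
  ⨆ (s : Finset X) (_ : (s : Set X) ⊆ K), ENNReal.ofReal (finMag s)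

/-- The real-valued magnitude of a (compact) subset of a metric space. -/
noncomputable def cMag {X : Type*} [MetricSpace X] (K : Set X) : ℝ :=
  (cMagE K).toReal

/-- A metric space is tractable when it is positive definite and all of its closed balls
are compact and of finite magnitude. -/
def Tractable (X : Type*) [MetricSpace X] : Prop :=
  IsPosDefSpace X ∧ (∀ (x : X) (r : ℝ), IsCompact (closedBall x r)) ∧
    ∀ (x : X) (r : ℝ), cMagE (closedBall x r) < ⊤

/- ### Auxiliary lemmas -/

lemma posdef_key {n : Type*} [Fintype n] [DecidableEq n] {A : Matrix n n ℝ}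
    (hA : A.PosDef) (v : n → ℝ) :
    2 * (∑ i, v i) - v ⬝ᵥ (A *ᵥ v) ≤ ∑ i, ∑ j, A⁻¹ i j := by
  have hdet : IsUnit A.det := hA.det_pos.ne'.isUnit
  set u : n → ℝ := A⁻¹ *ᵥ 1 with hu_def
  have hu : A *ᵥ u = 1 := by
    rw [hu_def, Matrix.mulVec_mulVec, Matrix.mul_nonsing_inv _ hdet, Matrix.one_mulVec]
  have hsum : ∑ i, ∑ j, A⁻¹ i j = u ⬝ᵥ (A *ᵥ u) := by
    rw [hu]
    simp [dotProduct, hu_def, Matrix.mulVec]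
  have hsymm : ∀ w z : n → ℝ, w ⬝ᵥ (A *ᵥ z) = z ⬝ᵥ (A *ᵥ w) := by
    intro w z
    simp only [dotProduct, Matrix.mulVec, Finset.mul_sum]
    rw [Finset.sum_comm]
    refine Finset.sum_congr rfl fun i _ => Finset.sum_congr rfl fun j _ => ?_
    have : A j i = A i j := by
      conv_lhs => rw [← hA.isHermitian]
      simp [Matrix.conjTranspose_apply]
    rw [this]; ring
  have hps : (0:ℝ) ≤ (v - u) ⬝ᵥ (A *ᵥ (v - u)) := by
    have := hA.posSemidef.dotProduct_mulVec_nonneg (v - u)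
    simpa using this
  have hexp : (v - u) ⬝ᵥ (A *ᵥ (v - u))
      = v ⬝ᵥ (A *ᵥ v) - 2 * (v ⬝ᵥ (A *ᵥ u)) + u ⬝ᵥ (A *ᵥ u) := by
    rw [Matrix.mulVec_sub, sub_dotProduct, dotProduct_sub,
      dotProduct_sub, hsymm u v]
    ring
  have hv1 : v ⬝ᵥ (A *ᵥ u) = ∑ i, v i := by
    rw [hu]; simp [dotProduct]
  rw [hsum]
  rw [hexp, hv1] at hps
  linarith

lemma finMag_nonneg {X : Type*} [MetricSpace X] (hpd : IsPosDefSpace X) (s : Finset X) :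
    0 ≤ finMag s := by
  letI : DecidableEq X := Classical.decEq X
  have h := ((hpd s).inv).posSemidef.dotProduct_mulVec_nonneg (1 : s → ℝ)
  have : (1 : s → ℝ) ⬝ᵥ ((simMatrix s)⁻¹ *ᵥ 1) = ∑ i, ∑ j, (simMatrix s)⁻¹ i j := by
    simp [dotProduct, Matrix.mulVec]
  rw [show finMag s = ∑ i, ∑ j, (simMatrix s)⁻¹ i j from rfl, ← this]
  simpa using h

lemma finMag_mono {X : Type*} [MetricSpace X] (hpd : IsPosDefSpace X)
    {s t : Finset X} (hst : s ⊆ t) : finMag s ≤ finMag t := by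
  letI : DecidableEq X := Classical.decEq X
  set S := simMatrix s with hS
  set A := simMatrix t with hA
  have hSpd := hpd s
  have hApd := hpd t
  have hSdet : IsUnit S.det := hSpd.det_pos.ne'.isUnit
  set c : s → ℝ := S⁻¹ *ᵥ 1 with hc_def
  have hc : S *ᵥ c = 1 := by
    rw [hc_def, Matrix.mulVec_mulVec, Matrix.mul_nonsing_inv _ hSdet, Matrix.one_mulVec]
  set e : s → t := fun i => ⟨i.1, hst i.2⟩ with he
  set v : t → ℝ := fun j => ∑ i : s, if e i = j then c i else 0 with hv
  have hv_sum : ∑ j, v j = ∑ i, c i := by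
    rw [hv]
    rw [Finset.sum_comm]
    simp
  have hc_sum : ∑ i, c i = finMag s := by
    simp [finMag, hc_def, Matrix.mulVec, dotProduct, ← hS]
  have hv_dot : ∀ w : t → ℝ, v ⬝ᵥ w = ∑ i, c i * w (e i) := by
    intro w
    simp only [dotProduct, hv, Finset.sum_mul, ite_mul, zero_mul]
    rw [Finset.sum_comm]
    simp
  have hAv : ∀ j, (A *ᵥ v) j = ∑ i, A j (e i) * c i := by
    intro j
    simp only [Matrix.mulVec, dotProduct, hv, Finset.mul_sum, mul_ite, mul_zero]
    rw [Finset.sum_comm]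
    simp
  have hAe : ∀ i i' : s, A (e i) (e i') = S i i' := by
    intro i i'; rfl
  have hvAv : v ⬝ᵥ (A *ᵥ v) = ∑ i, c i := by
    rw [hv_dot]
    have hAvS : ∀ i : s, (A *ᵥ v) (e i) = (S *ᵥ c) i := by
      intro i
      rw [hAv]
      simp only [Matrix.mulVec, dotProduct, hAe]
    calc ∑ i, c i * (A *ᵥ v) (e i) = ∑ i, c i * (S *ᵥ c) i := by
          refine Finset.sum_congr rfl fun i _ => by rw [hAvS]
      _ = ∑ i, c i := by rw [hc]; simp
  have key := posdef_key hApd v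
  rw [hv_sum, hvAv, hc_sum] at key
  have hend : finMag t = ∑ i, ∑ j, A⁻¹ i j := by simp [finMag, ← hA]
  rw [hend]
  linarith

lemma cMagE_mono {X : Type*} [MetricSpace X] {K K' : Set X} (h : K ⊆ K') :
    cMagE K ≤ cMagE K' := by
  refine iSup₂_le fun s hs => le_iSup₂_of_le s (hs.trans h) le_rfl

lemma cMagE_coe_finset {X : Type*} [MetricSpace X] (hpd : IsPosDefSpace X) (s : Finset X) :
    cMagE (s : Set X) = ENNReal.ofReal (finMag s) := by
  apply le_antisymm
  · refine iSup₂_le fun t ht => ?_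
    exact ENNReal.ofReal_le_ofReal (finMag_mono hpd (Finset.coe_subset.1 ht))
  · exact le_iSup₂_of_le s subset_rfl le_rfl

lemma cMag_coe_finset {X : Type*} [MetricSpace X] (hpd : IsPosDefSpace X) (s : Finset X) :
    cMag (s : Set X) = finMag s := by
  rw [cMag, cMagE_coe_finset hpd, ENNReal.toReal_ofReal (finMag_nonneg hpd s)]

lemma cMag_nonneg {X : Type*} [MetricSpace X] (K : Set X) : 0 ≤ cMag K :=
  ENNReal.toReal_nonneg

/-- For a tractable metric space `M`, the magnitude map on nonempty compact
subsets is uniformly continuous iff the magnitude map on nonempty finite subsets is. -/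
theorem stmt_11 {M : Type*} [MetricSpace M] (hM : Tractable M) :
    UniformContinuous (fun K : NonemptyCompacts M => cMag (K : Set M)) ↔
      UniformContinuous (fun F : {K : NonemptyCompacts M // (K : Set M).Finite} =>
        cMag ((F : NonemptyCompacts M) : Set M)) := by
  obtain ⟨hpd, hball, hmag⟩ := hM
  constructor
  · intro h
    exact h.comp uniformContinuous_subtype_val
  · intro h
    have hfin : ∀ K : NonemptyCompacts M, cMagE (K : Set M) ≠ ⊤ := by
      intro K
      obtain ⟨r, hr⟩ := K.isCompact.isBounded.subset_closedBall K.nonempty.some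
      exact ((cMagE_mono hr).trans_lt (hmag _ r)).ne
    rw [Metric.uniformContinuous_iff] at h ⊢
    intro ε hε
    obtain ⟨δ, hδpos, hδ⟩ := h (ε/2) (by positivity)
    refine ⟨δ/2, by positivity, ?_⟩
    have main : ∀ K K' : NonemptyCompacts M, dist K K' < δ/2 →
        cMag (K : Set M) ≤ cMag (K' : Set M) + ε/2 := by
      intro K K' hd
      have hKE := hfin K
      have hK'E := hfin K'
      have hcm' : 0 ≤ cMag (K' : Set M) + ε/2 := by
        have := cMag_nonneg (K' : Set M); linarith
      refine ENNReal.toReal_le_of_le_ofReal hcm' ?_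
      refine iSup₂_le fun s hs => ?_
      refine ENNReal.ofReal_le_ofReal ?_
      rcases s.eq_empty_or_nonempty with hse | hsne
      · subst hse
        have h0 : finMag (∅ : Finset M) = 0 := by simp [finMag]
        rw [h0]
        have := cMag_nonneg (K' : Set M); linarith
      · -- choose nearby points in K'
        have hedist : EMetric.hausdorffEdist (K : Set M) (K' : Set M) ≠ ⊤ :=
          Metric.hausdorffEdist_ne_top_of_nonempty_of_bounded K.nonempty K'.nonempty
            K.isCompact.isBounded K'.isCompact.isBounded
      -- `dist K K' = hausdorffDist` on NonemptyCompacts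
        have hdist_eq : dist K K' = Metric.hausdorffDist (K : Set M) (K' : Set M) :=
          Metric.NonemptyCompacts.dist_eq
        have hchoice : ∀ x ∈ (s : Set M), ∃ y ∈ (K' : Set M), dist x y < δ/2 := by
          intro x hx
          have h1 : Metric.infDist x (K' : Set M)
              ≤ Metric.hausdorffDist (K : Set M) (K' : Set M) :=
            Metric.infDist_le_hausdorffDist_of_mem (hs hx) hedist
          have h2 : Metric.infDist x (K' : Set M) < δ/2 := by
            rw [← hdist_eq] at h1; linarith
          exact (Metric.infDist_lt_iff K'.nonempty).1 h2
        choose! f hfmem hfdist using hchoice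
        classical
        set s' : Finset M := s.image f with hs'
        have hs'ne : s'.Nonempty := hsne.image f
        have hs'sub : (s' : Set M) ⊆ (K' : Set M) := by
          intro y hy
          simp only [hs', Finset.coe_image, Set.mem_image, Finset.mem_coe] at hy
          obtain ⟨x, hx, rfl⟩ := hy
          exact hfmem x (by simpa using hx)
        have hHd : Metric.hausdorffDist (s : Set M) (s' : Set M) ≤ δ/2 := by
          apply Metric.hausdorffDist_le_of_mem_dist (by positivity)
          · intro x hx
            refine ⟨f x, ?_, (hfdist x hx).le⟩
            simp only [hs', Finset.coe_image]
            exact Set.mem_image_of_mem f hx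
          · intro y hy
            simp only [hs', Finset.coe_image, Set.mem_image, Finset.mem_coe] at hy
            obtain ⟨x, hx, rfl⟩ := hy
            exact ⟨x, by simpa using hx, by rw [dist_comm]; exact (hfdist x (by simpa using hx)).le⟩
        -- package as elements of the subtype of finite nonempty compacts
        set Fs : NonemptyCompacts M :=
          ⟨⟨(s : Set M), s.finite_toSet.isCompact⟩, by simpa using hsne⟩ with hFs
        set Fs' : NonemptyCompacts M :=
          ⟨⟨(s' : Set M), s'.finite_toSet.isCompact⟩, by simpa using hs'ne⟩ with hFs'
        have hdFF : dist (⟨Fs, s.finite_toSet⟩ : {K : NonemptyCompacts M // (K : Set M).Finite})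
            (⟨Fs', s'.finite_toSet⟩ : {K : NonemptyCompacts M // (K : Set M).Finite}) < δ := by
          rw [Subtype.dist_eq]
          have : dist Fs Fs' = Metric.hausdorffDist (s : Set M) (s' : Set M) :=
            Metric.NonemptyCompacts.dist_eq
          rw [this]
          linarith
        have habs := hδ hdFF
        simp only [Real.dist_eq] at habs
        have hcs : cMag ((Fs : NonemptyCompacts M) : Set M) = finMag s := cMag_coe_finset hpd s
        have hcs' : cMag ((Fs' : NonemptyCompacts M) : Set M) = finMag s' := cMag_coe_finset hpd s'
        rw [hcs, hcs'] at habs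
        have habs' : finMag s ≤ finMag s' + ε/2 := by
          rcases abs_sub_lt_iff.1 habs with ⟨h1, _⟩
          linarith
        have hmono : finMag s' ≤ cMag (K' : Set M) := by
          have : cMagE (s' : Set M) ≤ cMagE (K' : Set M) := cMagE_mono hs'sub
          have h2 := ENNReal.toReal_mono hK'E this
          rwa [show (cMagE (s' : Set M)).toReal = cMag (s' : Set M) from rfl,
            cMag_coe_finset hpd s'] at h2
        linarith
    intro K K' hKK'
    have h1 := main K K' hKK'
    have h2 := main K' K (by rwa [dist_comm] at hKK')
    rw [Real.dist_eq, abs_sub_lt_iff]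
    constructor <;> linarith
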